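/- Let P be a finite partially ordered set equipped with an involution φ : P → P (so φ∘φ = id) satisfying a ≤ b if and only if φ(b) ≤ φ(a). Then for any two self-complementary ideals I and J of P, the distance from I to J in the flip graph of P equals |I \ J|; in particular, the flip graph of P is connected. -/

import Mathlib

open Finset

/-- An ideal (downward-closed subset, possibly empty) of a finite poset. -/
def IsIdeal {P : Type*} [PartialOrder P] (I : Finset P) : Prop :=
  ∀ a ∈ I, ∀ b, b ≤ a → b ∈ I

/-- A self-complementary ideal with respect to an involution `φ`. -/
def IsSCIdeal {P : Type*} [PartialOrder P] (φ : P → P) (I : Finset P) : Prop :=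
  IsIdeal I ∧ ∀ a, a ∈ I ↔ φ a ∉ I

/-- The flip graph on self-complementary ideals: two ideals are adjacent when they
differ in exactly one element each way. -/
def FlipGraph {P : Type*} [PartialOrder P] [DecidableEq P] (φ : P → P) :
    SimpleGraph {I : Finset P // IsSCIdeal φ I} where
  Adj I J := I ≠ J ∧ (I.1 \ J.1).card = 1 ∧ (J.1 \ I.1).card = 1
  symm := ⟨fun _ _ h => ⟨h.1.symm, h.2.2, h.2.1⟩⟩
  loopless := ⟨fun _ h => h.1 rfl⟩

/-- Eccentricity of a vertex: its maximum distance to any vertex. -/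
noncomputable def eccentricity {V : Type*} (G : SimpleGraph V) (v : V) : ℕ :=
  ⨆ u, G.dist v u

/-- Diameter of a graph: the maximum eccentricity. -/
noncomputable def graphDiam {V : Type*} (G : SimpleGraph V) : ℕ :=
  ⨆ v, eccentricity G v

/-- Radius of a graph: the minimum eccentricity. -/
noncomputable def graphRadius {V : Type*} (G : SimpleGraph V) : ℕ :=
  ⨅ v, eccentricity G v

/-- The order-reversing involution `aᵢ ↦ ℓᵢ + 1 - aᵢ` on a product of chains
(0-indexed via `Fin.rev`). -/
def chainRev {d : ℕ} (ℓ : Fin d → ℕ) (a : ∀ i, Fin (ℓ i)) : ∀ i, Fin (ℓ i) :=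
  fun i => (a i).rev

set_option linter.unusedSectionVars false
section Aux

variable {P : Type*} [Fintype P] [PartialOrder P] [DecidableEq P]
variable {φ : P → P}

lemma walk_length_lb {I J : {I : Finset P // IsSCIdeal φ I}}
    (p : (FlipGraph φ).Walk I J) : (I.1 \ J.1).card ≤ p.length := by
  induction p with
  | nil => simp
  | @cons I I' J h p ih =>
    have hsub : I.1 \ J.1 ⊆ (I'.1 \ J.1) ∪ (I.1 \ I'.1) := by
      intro a ha
      simp only [mem_sdiff, mem_union] at ha ⊢
      by_cases hI' : a ∈ I'.1
      · exact Or.inl ⟨hI', ha.2⟩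
      · exact Or.inr ⟨ha.1, hI'⟩
    calc (I.1 \ J.1).card ≤ ((I'.1 \ J.1) ∪ (I.1 \ I'.1)).card := card_le_card hsub
      _ ≤ (I'.1 \ J.1).card + (I.1 \ I'.1).card := card_union_le _ _
      _ ≤ p.length + 1 := by
          rw [h.2.1]; exact Nat.add_le_add_right ih 1
      _ = (SimpleGraph.Walk.cons h p).length := by simp [Nat.add_comm]

lemma exists_walk (hinv : ∀ a, φ (φ a) = a) (hord : ∀ a b : P, a ≤ b ↔ φ b ≤ φ a) :
    ∀ n (I J : {I : Finset P // IsSCIdeal φ I}), (I.1 \ J.1).card = n →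
    ∃ p : (FlipGraph φ).Walk I J, p.length = n := by
  intro n
  induction n with
  | zero =>
    intro I J h
    have hIJ : I = J := by
      have hsub : I.1 ⊆ J.1 := by
        rw [← sdiff_eq_empty_iff_subset, ← card_eq_zero]; exact h
      have hsub2 : J.1 ⊆ I.1 := by
        intro a ha
        by_contra haI
        have h1 : φ a ∈ I.1 := by
          by_contra h2
          exact haI ((I.2.2 a).mpr h2)
        have h2 : φ a ∉ J.1 := (J.2.2 a).mp ha
        exact h2 (hsub h1)
      exact Subtype.ext (Finset.Subset.antisymm hsub hsub2)
    subst hIJ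
    exact ⟨SimpleGraph.Walk.nil, rfl⟩
  | succ n ih =>
    intro I J h
    -- pick x maximal in I \ J
    obtain ⟨x, hx, hxmax⟩ := (I.1 \ J.1).exists_maximal (by rw [← card_pos, h]; omega)
    rw [mem_sdiff] at hx
    obtain ⟨hxI, hxJ⟩ := hx
    have hφxJ : φ x ∈ J.1 := by
      by_contra h2; exact hxJ ((J.2.2 x).mpr h2)
    have hφxI : φ x ∉ I.1 := (I.2.2 x).mp hxI
    have hxne : x ≠ φ x := fun he => hφxI (he ▸ hxI)
    -- x is maximal in I
    have hxmaxI : ∀ b ∈ I.1, ¬ x < b := by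
      intro b hb hlt
      by_cases hbJ : b ∈ J.1
      · exact hxJ (J.2.1 b hbJ x hlt.le)
      · exact hlt.not_ge (hxmax (mem_sdiff.mpr ⟨hb, hbJ⟩) hlt.le)
    have hnle : ¬ x ≤ φ x := fun hle => hxJ (J.2.1 (φ x) hφxJ x hle)
    set I' : Finset P := insert (φ x) (I.1.erase x) with hI'def
    have hmemI' : ∀ a, a ∈ I' ↔ a = φ x ∨ (a ∈ I.1 ∧ a ≠ x) := by
      intro a; simp [hI'def, mem_insert, mem_erase, and_comm]
    -- I' is an SC ideal
    have hSC : IsSCIdeal φ I' := by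
      constructor
      · intro a ha b hba
        rw [hmemI'] at ha ⊢
        rcases ha with ha | ⟨haI, hax⟩
        · have hba' : b ≤ φ x := ha ▸ hba
          rcases eq_or_ne b (φ x) with rfl | hbne
          · exact Or.inl rfl
          · right
            have hab : x ≤ φ b := by
              have := (hord b (φ x)).mp hba'
              rwa [hinv] at this
            have hane : x ≠ φ b := fun he => hbne (by rw [he, hinv])
            have hbI : b ∈ I.1 := by
              by_contra hbI
              have : φ b ∈ I.1 := by
                by_contra h2; exact hbI ((I.2.2 b).mpr h2)
              exact hxmaxI (φ b) this (lt_of_le_of_ne hab hane)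
            refine ⟨hbI, fun he => ?_⟩
            subst he
            exact hnle hba'
        · right
          refine ⟨I.2.1 a haI b hba, fun he => ?_⟩
          subst he
          exact hxmaxI a haI (lt_of_le_of_ne hba hax.symm)
      · intro a
        rcases eq_or_ne a x with rfl | hax
        · rw [hmemI', hmemI']
          simp [hxne, Ne.symm hxne, hinv, hφxI]
        · rcases eq_or_ne a (φ x) with rfl | haφx
          · rw [hmemI', hmemI', hinv]
            simp [hxne, Ne.symm hxne, hφxI]
          · have h1 : φ a ≠ x := fun he => haφx (by rw [← he, hinv])
            have h2 : φ a ≠ φ x := fun he => hax (by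
              have := congrArg φ he; rwa [hinv, hinv] at this)
            rw [hmemI', hmemI']
            simp only [haφx, h2, false_or]
            constructor
            · rintro ⟨haI, -⟩ ⟨hφaI, -⟩
              exact (I.2.2 a).mp haI hφaI
            · intro hn
              refine ⟨(I.2.2 a).mpr (fun hφaI => hn ⟨hφaI, h1⟩), hax⟩
        
    -- adjacency
    have hIsub : I.1 \ I' = {x} := by
      ext a
      simp only [mem_sdiff, hmemI', mem_singleton]
      constructor
      · rintro ⟨haI, hn⟩
        by_contra hax
        exact hn (Or.inr ⟨haI, hax⟩)
      · rintro rfl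
        refine ⟨hxI, ?_⟩
        rintro (he | ⟨-, he⟩)
        · exact hxne he
        · exact he rfl
    have hI'sub : I' \ I.1 = {φ x} := by
      ext a
      simp only [mem_sdiff, hmemI', mem_singleton]
      constructor
      · rintro ⟨he | ⟨haI, -⟩, hn⟩
        · exact he
        · exact absurd haI hn
      · rintro rfl
        exact ⟨Or.inl rfl, hφxI⟩
    have hne : I ≠ (⟨I', hSC⟩ : {I : Finset P // IsSCIdeal φ I}) := by
      intro he
      have hval : I.1 = I' := congrArg Subtype.val he
      have : x ∈ I' := hval ▸ hxI
      rw [hmemI'] at this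
      rcases this with he2 | ⟨-, he2⟩
      · exact hxne he2
      · exact he2 rfl
    have hadj : (FlipGraph φ).Adj I ⟨I', hSC⟩ := by
      refine ⟨hne, ?_, ?_⟩
      · rw [show (⟨I', hSC⟩ : {I : Finset P // IsSCIdeal φ I}).1 = I' from rfl, hIsub]
        simp
      · rw [show (⟨I', hSC⟩ : {I : Finset P // IsSCIdeal φ I}).1 = I' from rfl, hI'sub]
        simp
    -- card decreases
    have hcard : (I' \ J.1).card = n := by
      have : I' \ J.1 = (I.1 \ J.1).erase x := by
        ext a
        simp only [mem_sdiff, hmemI', mem_erase]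
        constructor
        · rintro ⟨he | ⟨haI, hax⟩, haJ⟩
          · exact absurd hφxJ (he ▸ haJ)
          · exact ⟨hax, haI, haJ⟩
        · rintro ⟨hax, haI, haJ⟩
          exact ⟨Or.inr ⟨haI, hax⟩, haJ⟩
      rw [this, card_erase_of_mem (mem_sdiff.mpr ⟨hxI, hxJ⟩), h]
      omega
    obtain ⟨p, hp⟩ := ih ⟨I', hSC⟩ J hcard
    exact ⟨SimpleGraph.Walk.cons hadj p, by simp [hp]⟩

end Aux

/-- For any two self-complementary ideals `I`, `J` of a finite self-dual poset,
the distance from `I` to `J` in the flip graph is `|I \ J|`; in particular,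
the flip graph is connected (preconnected). -/
theorem flipGraph_dist_eq_card_sdiff {P : Type*} [Fintype P] [PartialOrder P] [DecidableEq P]
    (φ : P → P) (hinv : ∀ a, φ (φ a) = a)
    (hord : ∀ a b : P, a ≤ b ↔ φ b ≤ φ a) :
    (∀ I J : {I : Finset P // IsSCIdeal φ I},
      (FlipGraph φ).dist I J = (I.1 \ J.1).card) ∧
    (FlipGraph φ).Preconnected := by
  have hwalk := exists_walk hinv hord
  constructor
  · intro I J
    obtain ⟨p, hp⟩ := hwalk _ I J rfl
    refine le_antisymm (hp ▸ SimpleGraph.dist_le p) ?_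
    have hreach : (FlipGraph φ).Reachable I J := ⟨p⟩
    obtain ⟨q, hq⟩ := hreach.exists_walk_length_eq_dist
    rw [← hq]
    exact walk_length_lb q
  · intro I J
    obtain ⟨p, -⟩ := hwalk _ I J rfl
    exact ⟨p⟩
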